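/- Let G be a graph and let G' be obtained from G by attaching r ≥ 5 pendant vertices to each vertex of G and subdividing each original edge of G with two new vertices. Then the original vertex set V(G) is an efficient dominating set of G', and γ_{4R}(G') = 5·γ(G') = 5|V(G)|. -/

import Mathlib

open scoped Classical
open Finset

/-- A quadruple Roman dominating function: labels in {0,…,5}, and every vertex with
label at most 3 satisfies the quadruple Roman condition. -/
def Is4RDF {V : Type*} [Fintype V] (G : SimpleGraph V) (f : V → ℕ) : Prop :=
  (∀ v, f v ≤ 5) ∧
  ∀ x, f x ≤ 3 →
    f x + ∑ v ∈ G.neighborFinset x, f v ≥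
      ((G.neighborFinset x).filter fun y => f y ≠ 0).card + 4

/-- The weight of a labelling. -/
def rdfWeight {V : Type*} [Fintype V] (f : V → ℕ) : ℕ := ∑ v, f v

/-- The quadruple Roman domination number. -/
noncomputable def gamma4R {V : Type*} [Fintype V] (G : SimpleGraph V) : ℕ :=
  sInf {w | ∃ f, Is4RDF G f ∧ rdfWeight f = w}

/-- A dominating set. -/
def IsDomSet {V : Type*} [Fintype V] (G : SimpleGraph V) (D : Finset V) : Prop :=
  ∀ v, v ∉ D → ∃ u ∈ D, G.Adj u v

/-- The domination number. -/
noncomputable def gammaDom {V : Type*} [Fintype V] (G : SimpleGraph V) : ℕ :=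
  sInf {n | ∃ D : Finset V, IsDomSet G D ∧ D.card = n}

/-- An efficient dominating set: every vertex lies in exactly one closed
neighborhood of a vertex of `D`. -/
def IsEfficientDomSet {V : Type*} [Fintype V] (G : SimpleGraph V) (D : Finset V) : Prop :=
  ∀ v : V, ∃! u, u ∈ D ∧ (u = v ∨ G.Adj u v)

/-- The graph obtained from `G` by attaching `r` pendant leaves to each vertex and
subdividing each edge with two new vertices: vertex `Sum.inl v` is an original
vertex, `Sum.inr (Sum.inl (v, j))` is the `j`-th leaf at `v`, and for each
adjacent pair `e = (u, w)` the vertex `Sum.inr (Sum.inr e)` is the subdivision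
vertex next to `u` on the edge `uw`. -/
def subdivPendant {V : Type*} (G : SimpleGraph V) (r : ℕ) :
    SimpleGraph (V ⊕ ((V × Fin r) ⊕ {e : V × V // G.Adj e.1 e.2})) where
  Adj a b :=
    match a, b with
    | Sum.inl u, Sum.inr (Sum.inl (v, _)) => u = v
    | Sum.inr (Sum.inl (v, _)), Sum.inl u => u = v
    | Sum.inl u, Sum.inr (Sum.inr e) => u = e.val.1
    | Sum.inr (Sum.inr e), Sum.inl u => u = e.val.1
    | Sum.inr (Sum.inr e), Sum.inr (Sum.inr e') =>
        e.val.1 = e'.val.2 ∧ e.val.2 = e'.val.1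
    | _, _ => False
  symm := by
    constructor
    rintro (u | ⟨v, j⟩ | e) (u' | ⟨v', j'⟩ | e') h
    · exact h.elim
    · exact h
    · exact h
    · exact h
    · exact h.elim
    · exact h.elim
    · exact h
    · exact h.elim
    · exact ⟨h.2.symm, h.1.symm⟩
  loopless := by
    constructor
    rintro (u | ⟨v, j⟩ | e) h
    · exact h
    · exact h
    · have he := e.prop
      rw [h.1] at he
      exact G.irrefl he

section Aux

variable {V : Type*} [Fintype V] {G : SimpleGraph V} {r : ℕ}

lemma sp_adj_leaf (y : V ⊕ ((V × Fin r) ⊕ {e : V × V // G.Adj e.1 e.2})) (v : V) (j : Fin r) :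
    (subdivPendant G r).Adj y (Sum.inr (Sum.inl (v, j))) ↔ y = Sum.inl v := by
  rcases y with u | ⟨w, i⟩ | e <;> simp [subdivPendant]

lemma sp_nbr_leaf (v : V) (j : Fin r) :
    (subdivPendant G r).neighborFinset (Sum.inr (Sum.inl (v, j))) = {Sum.inl v} := by
  ext y
  rw [SimpleGraph.mem_neighborFinset, (subdivPendant G r).adj_comm, sp_adj_leaf,
    Finset.mem_singleton]

lemma sp_adj_subdiv_inl (e : {e : V × V // G.Adj e.1 e.2}) (u : V) :
    (subdivPendant G r).Adj (Sum.inr (Sum.inr e)) (Sum.inl u) ↔ u = e.val.1 := by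
  simp [subdivPendant]

lemma sp_key {a b c : ℕ} (hb : b ≤ 3 → b + a ≥ (if a ≠ 0 then 1 else 0) + 4)
    (hc : c ≤ 3 → c + a ≥ (if a ≠ 0 then 1 else 0) + 4) : 5 ≤ a + (b + c) := by
  by_cases ha : a = 0
  · simp [ha] at hb hc
    by_cases hb3 : b ≤ 3
    · have := hb hb3; omega
    · omega
  · simp [ha] at hb hc
    by_cases hb3 : b ≤ 3
    · have := hb hb3; omega
    · by_cases hc3 : c ≤ 3
      · have := hc hc3; omega
      · omega

/-- The leaf condition for a 4RDF. -/
lemma sp_leaf_cond {f} (hf : Is4RDF (subdivPendant G r) f) (v : V) (j : Fin r)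
    (h3 : f (Sum.inr (Sum.inl (v, j))) ≤ 3) :
    f (Sum.inr (Sum.inl (v, j))) + f (Sum.inl v) ≥
      (if f (Sum.inl v) ≠ 0 then 1 else 0) + 4 := by
  have := hf.2 _ h3
  rwa [sp_nbr_leaf, Finset.sum_singleton, Finset.filter_singleton, apply_ite Finset.card,
    Finset.card_singleton, Finset.card_empty] at this

lemma sp_per_vertex (hr : 5 ≤ r) {f} (hf : Is4RDF (subdivPendant G r) f) (v : V) :
    5 ≤ f (Sum.inl v) + ∑ j : Fin r, f (Sum.inr (Sum.inl (v, j))) := by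
  have h0 : (0 : ℕ) < r := by omega
  have h1 : (1 : ℕ) < r := by omega
  set j0 : Fin r := ⟨0, h0⟩
  set j1 : Fin r := ⟨1, h1⟩
  have hne : j0 ≠ j1 := by simp [j0, j1, Fin.ext_iff]
  have hsub : f (Sum.inr (Sum.inl (v, j0))) + f (Sum.inr (Sum.inl (v, j1))) ≤
      ∑ j : Fin r, f (Sum.inr (Sum.inl (v, j))) := by
    have h := Finset.sum_le_sum_of_subset (f := fun j => f (Sum.inr (Sum.inl (v, j))))
      (Finset.subset_univ ({j0, j1} : Finset (Fin r)))
    rwa [Finset.sum_pair hne] at h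
  have hb : f (Sum.inr (Sum.inl (v, j0))) ≤ 3 → _ := sp_leaf_cond hf v j0
  have hc : f (Sum.inr (Sum.inl (v, j1))) ≤ 3 → _ := sp_leaf_cond hf v j1
  have := sp_key hb hc
  omega

/-- The canonical 4RDF. -/
lemma sp_f0_is4RDF : Is4RDF (subdivPendant G r)
    (Sum.elim (fun _ => 5) (fun _ => 0)) := by
  set f0 : V ⊕ ((V × Fin r) ⊕ {e : V × V // G.Adj e.1 e.2}) → ℕ :=
    Sum.elim (fun _ => 5) (fun _ => 0) with hf0
  constructor
  · rintro (u | t) <;> simp [f0]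
  · rintro (u | ⟨v, j⟩ | e) hx
    · simp [f0] at hx
    · rw [sp_nbr_leaf, Finset.sum_singleton, Finset.filter_singleton]
      simp [f0]
    · have hmem : Sum.inl e.val.1 ∈ (subdivPendant G r).neighborFinset (Sum.inr (Sum.inr e)) := by
        rw [SimpleGraph.mem_neighborFinset, (subdivPendant G r).adj_comm]
        simp [subdivPendant]
      have hsum : 5 ≤ ∑ y ∈ (subdivPendant G r).neighborFinset (Sum.inr (Sum.inr e)), f0 y := by
        have := Finset.single_le_sum (f := f0) (fun i _ => Nat.zero_le _) hmem
        simpa [f0] using this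
      have hcard : (((subdivPendant G r).neighborFinset (Sum.inr (Sum.inr e))).filter
          fun y => f0 y ≠ 0).card ≤ 1 := by
        have hss : (((subdivPendant G r).neighborFinset (Sum.inr (Sum.inr e))).filter
            fun y => f0 y ≠ 0) ⊆ {Sum.inl e.val.1} := by
          intro y hy
          rw [Finset.mem_filter, SimpleGraph.mem_neighborFinset] at hy
          obtain ⟨hadj, hne⟩ := hy
          rcases y with u | t
          · rw [sp_adj_subdiv_inl] at hadj
            simp [hadj]
          · simp [f0] at hne
        simpa using Finset.card_le_card hss
      have : f0 (Sum.inr (Sum.inr e)) = 0 := rfl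
      omega

end Aux

theorem gamma4R_subdivPendant {V : Type*} [Fintype V] (G : SimpleGraph V)
    (r : ℕ) (hr : 5 ≤ r) :
    IsEfficientDomSet (subdivPendant G r) (Finset.univ.image Sum.inl) ∧
    gamma4R (subdivPendant G r) = 5 * gammaDom (subdivPendant G r) ∧
    gamma4R (subdivPendant G r) = 5 * Fintype.card V := by

  classical
  set G' := subdivPendant G r with hG'
  -- efficiency
  have heff : IsEfficientDomSet G' (Finset.univ.image Sum.inl) := by
    rintro (v | ⟨v, j⟩ | e)
    · refine ⟨Sum.inl v, ⟨Finset.mem_image_of_mem _ (Finset.mem_univ v), Or.inl rfl⟩, ?_⟩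
      rintro u ⟨hu, h⟩
      obtain ⟨w, -, rfl⟩ := Finset.mem_image.1 hu
      rcases h with h | h
      · exact h
      · exact absurd h (by simp [G', subdivPendant])
    · refine ⟨Sum.inl v, ⟨Finset.mem_image_of_mem _ (Finset.mem_univ v),
        Or.inr ((sp_adj_leaf _ v j).2 rfl)⟩, ?_⟩
      rintro u ⟨hu, h⟩
      obtain ⟨w, -, rfl⟩ := Finset.mem_image.1 hu
      rcases h with h | h
      · exact absurd h (by simp)
      · rw [sp_adj_leaf] at h; exact h
    · refine ⟨Sum.inl e.val.1, ⟨Finset.mem_image_of_mem _ (Finset.mem_univ _),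
        Or.inr (by simp [G', subdivPendant])⟩, ?_⟩
      rintro u ⟨hu, h⟩
      obtain ⟨w, -, rfl⟩ := Finset.mem_image.1 hu
      rcases h with h | h
      · exact absurd h (by simp)
      · rw [(subdivPendant G r).adj_comm, sp_adj_subdiv_inl] at h
        simp [h]
  -- f0 weight
  set f0 : V ⊕ ((V × Fin r) ⊕ {e : V × V // G.Adj e.1 e.2}) → ℕ :=
    Sum.elim (fun _ => 5) (fun _ => 0) with hf0
  have hw0 : rdfWeight f0 = 5 * Fintype.card V := by
    rw [rdfWeight, Fintype.sum_sum_type]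
    simp [f0, mul_comm]
  have hmem4R : 5 * Fintype.card V ∈ {w | ∃ f, Is4RDF G' f ∧ rdfWeight f = w} :=
    ⟨f0, sp_f0_is4RDF, hw0⟩
  -- lower bound for 4RDF
  have hlow : ∀ w ∈ {w | ∃ f, Is4RDF G' f ∧ rdfWeight f = w}, 5 * Fintype.card V ≤ w := by
    rintro w ⟨f, hf, rfl⟩
    rw [rdfWeight, Fintype.sum_sum_type, Fintype.sum_sum_type, Fintype.sum_prod_type]
    calc 5 * Fintype.card V = ∑ _v : V, 5 := by simp [mul_comm]
      _ ≤ ∑ v : V, (f (Sum.inl v) + ∑ j : Fin r, f (Sum.inr (Sum.inl (v, j)))) :=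
          Finset.sum_le_sum fun v _ => sp_per_vertex hr hf v
      _ = ∑ v : V, f (Sum.inl v) + ∑ v : V, ∑ j : Fin r, f (Sum.inr (Sum.inl (v, j))) :=
          Finset.sum_add_distrib
      _ ≤ _ := by omega
  have h4R : gamma4R G' = 5 * Fintype.card V :=
    le_antisymm (Nat.sInf_le hmem4R) (le_csInf ⟨_, hmem4R⟩ hlow)
  -- domination number
  have hDdom : IsDomSet G' (Finset.univ.image Sum.inl) := by
    rintro (v | ⟨v, j⟩ | e) hx
    · exact absurd (Finset.mem_image_of_mem _ (Finset.mem_univ v)) hx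
    · exact ⟨Sum.inl v, Finset.mem_image_of_mem _ (Finset.mem_univ v),
        (sp_adj_leaf _ v j).2 rfl⟩
    · exact ⟨Sum.inl e.val.1, Finset.mem_image_of_mem _ (Finset.mem_univ _),
        by simp [G', subdivPendant]⟩
  have hDcard : (Finset.univ.image (Sum.inl : V → V ⊕ ((V × Fin r) ⊕ {e : V × V // G.Adj e.1 e.2}))).card = Fintype.card V := by
    rw [Finset.card_image_of_injective _ Sum.inl_injective, Finset.card_univ]
  have hmemD : Fintype.card V ∈ {n | ∃ D, IsDomSet G' D ∧ D.card = n} :=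
    ⟨_, hDdom, hDcard⟩
  have hlowD : ∀ n ∈ {n | ∃ D, IsDomSet G' D ∧ D.card = n}, Fintype.card V ≤ n := by
    rintro n ⟨D, hD, rfl⟩
    have h0 : (0 : ℕ) < r := by omega
    have key : ∀ v : V, ∃ s ∈ D,
        s = Sum.inr (Sum.inl (v, ⟨0, h0⟩)) ∨ s = Sum.inl v := by
      intro v
      by_cases h : Sum.inr (Sum.inl (v, (⟨0, h0⟩ : Fin r))) ∈ D
      · exact ⟨_, h, Or.inl rfl⟩
      · obtain ⟨u, hu, hadj⟩ := hD _ h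
        exact ⟨u, hu, Or.inr ((sp_adj_leaf u v ⟨0, h0⟩).1 hadj)⟩
    choose g hgD hgv using key
    have hginj : Set.InjOn g (Finset.univ : Finset V) := by
      intro v _ v' _ h
      rcases hgv v with h1 | h1 <;> rcases hgv v' with h2 | h2 <;>
        rw [h1, h2] at h <;> simp_all
    rw [← Finset.card_univ]
    exact Finset.card_le_card_of_injOn g (fun v _ => hgD v) hginj
  have hdom : gammaDom G' = Fintype.card V :=
    le_antisymm (Nat.sInf_le hmemD) (le_csInf ⟨_, hmemD⟩ hlowD)
  exact ⟨heff, by rw [h4R, hdom], h4R⟩
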